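/- Fix n ≥ 2. Let A be the n×n real matrix with entries a_{i,i+1} = n−i for 1 ≤ i ≤ n−1, a_{i,i} = n for 2 ≤ i ≤ n, a_{i,j} = 2 whenever i − j is an even positive integer, and all other entries zero. Then the characteristic polynomial of A is (X − 2(n−1))·(X − (n−2))^{n−1}; in particular, the matrix (1/(2(n−1)))·A is nonnegative, has (1,1) entry zero, spectral radius 1, exactly two distinct eigenvalues, and spread equal to n/(2(n−1)). -/

import Mathlib

open Matrix Polynomial

/-- The eigenvalues of a real square matrix: the multiset of roots (with multiplicity)
of its characteristic polynomial over `ℂ`. -/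
noncomputable def eigs {n : ℕ} (A : Matrix (Fin n) (Fin n) ℝ) : Multiset ℂ :=
  ((A.map Complex.ofReal).charpoly).roots

/-- The spectral radius: the maximum of `|λ|` over the eigenvalues `λ`. -/
noncomputable def specRad {n : ℕ} (A : Matrix (Fin n) (Fin n) ℝ) : ℝ :=
  sSup {r : ℝ | ∃ μ ∈ eigs A, r = ‖μ‖}

/-- The spread: the maximum of `|λ - μ|` over pairs of eigenvalues `λ, μ`. -/
noncomputable def spread {n : ℕ} (A : Matrix (Fin n) (Fin n) ℝ) : ℝ :=
  sSup {r : ℝ | ∃ μ ∈ eigs A, ∃ ν ∈ eigs A, r = ‖μ - ν‖}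

lemma charpoly_eq_of_triangular {R : Type*} [CommRing R] {n : ℕ}
    (A P T : Matrix (Fin n) (Fin n) R)
    (hAP : A * P = P * T)
    (hPl : ∀ i j : Fin n, i < j → P i j = 0)
    (hPd : ∀ i, P i i = 1)
    (hTu : ∀ i j : Fin n, j < i → T i j = 0) :
    A.charpoly = ∏ i, (X - C (T i i)) := by
  have hm : ∀ M N : Matrix (Fin n) (Fin n) R,
      (C : R →+* R[X]).mapMatrix (M * N) = (C : R →+* R[X]).mapMatrix M * (C : R →+* R[X]).mapMatrix N :=
    fun M N => _root_.map_mul _ M N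
  have key : charmatrix A * (C : R →+* R[X]).mapMatrix P
      = (C : R →+* R[X]).mapMatrix P * charmatrix T := by
    simp only [charmatrix, sub_mul, mul_sub]
    rw [← hm, hAP, hm]
    congr 1
    exact (Matrix.scalar_commute X (fun r => Commute.all X r) _)
  have hdetP : ((C : R →+* R[X]).mapMatrix P).det = 1 := by
    rw [Matrix.det_of_lowerTriangular]
    · simp [RingHom.mapMatrix_apply, hPd]
    · intro i j hij
      simp only [RingHom.mapMatrix_apply, Matrix.map_apply]
      rw [hPl i j (by exact hij), map_zero]
  have hdet := congrArg Matrix.det key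
  rw [det_mul, det_mul, hdetP, mul_one, one_mul] at hdet
  rw [show A.charpoly = (charmatrix A).det from rfl, hdet, show (∏ i, (X - C (T i i))) = (∏ i, (X - C (T i i))) from rfl]
  rw [Matrix.det_of_upperTriangular (M := charmatrix T)]
  · exact Finset.prod_congr rfl fun i _ => charmatrix_apply_eq T i
  · intro i j hij
    rw [charmatrix_apply_ne T i j (by exact fun h => absurd (h ▸ hij) (lt_irrefl _)),
      hTu i j hij, map_zero, neg_zero]


lemma prod_if {R : Type*} [CommRing R] (m : ℕ) (x y : R) :
    (∏ i : Fin (m+1), (if (i : ℕ) = 0 then x else y)) = x * y ^ m := by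
  rw [Fin.prod_univ_succ]
  simp [Fin.val_succ, Finset.prod_const]

lemma prod_tri {R : Type*} [CommRing R] (n : ℕ) (hn : 1 ≤ n) (x y : R) :
    (∏ i : Fin n, (if (i : ℕ) = 0 then x else y)) = x * y ^ (n-1) := by
  obtain ⟨m, rfl⟩ : ∃ m, n = m + 1 := ⟨n - 1, by omega⟩
  rw [prod_if]
  simp


def pent (i k : ℕ) : ℝ := if i < k then 0 else if i = k then 1 else 2
def tent (n j k : ℕ) : ℝ :=
  if j = k then (if k = 0 then 2*((n:ℝ)-1) else (n:ℝ)-2)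
  else if k = j + 1 then (n:ℝ) - k else 0


lemma key_sum (k : ℕ) : ∀ i : ℕ,
    (∑ j ∈ Finset.range i, if Even (i - j) then pent j k else 0) =
      if k < i then (i : ℝ) - k - 1 else 0 := by
  set Q : ℕ → Prop := fun i =>
    (∑ j ∈ Finset.range i, if Even (i - j) then pent j k else 0) =
      if k < i then (i : ℝ) - k - 1 else 0 with hQ
  have main : ∀ i : ℕ, Q i ∧ Q (i+1) := by
    intro i
    induction i with
    | zero =>
      constructor
      · simp [hQ]
      · simp only [hQ, Finset.sum_range_succ, Finset.range_zero, Finset.sum_empty, zero_add]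
        norm_num
    | succ m ih =>
      refine ⟨ih.2, ?_⟩
      have h3 : m + 1 + 1 = m + 2 := by omega
      simp only [hQ, h3]
      rw [Finset.sum_range_succ, Finset.sum_range_succ]
      have h1 : ∀ j ∈ Finset.range m, (if Even (m + 2 - j) then pent j k else 0)
          = (if Even (m - j) then pent j k else 0) := by
        intro j hj
        rw [Finset.mem_range] at hj
        have h2 : m + 2 - j = (m - j) + 2 := by omega
        rw [h2]
        simp [Nat.even_add]
      have ih1 : (∑ j ∈ Finset.range m, if Even (m - j) then pent j k else 0) =
          if k < m then (m : ℝ) - k - 1 else 0 := ih.1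
      rw [Finset.sum_congr rfl h1, ih1]
      have e1 : m + 2 - m = 2 := by omega
      have e2 : m + 2 - (m+1) = 1 := by omega
      rw [e1, e2]
      norm_num [pent]
      split_ifs
      any_goals (exfalso; omega)
      any_goals (push_cast; ring)
      all_goals have hx : k = m + 1 ∨ k = m := by omega
      all_goals rcases hx with rfl | rfl <;> push_cast <;> linarith
  exact fun i => (main i).1

lemma pent_lt {i k : ℕ} (h : k < i) : pent i k = 2 := by
  unfold pent; rw [if_neg (by omega), if_neg (by omega)]
lemma pent_eq (i : ℕ) : pent i i = 1 := by
  unfold pent; rw [if_neg (by omega), if_pos rfl]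
lemma pent_gt {i k : ℕ} (h : i < k) : pent i k = 0 := by
  unfold pent; rw [if_pos h]

lemma entry_eq (n i k : ℕ) (hn : 2 ≤ n) (hi : i < n) (hk : k < n) :
    (if i + 1 < n then ((n:ℝ) - (i+1)) * pent (i+1) k else 0)
      + (if 1 ≤ i then (n:ℝ) * pent i k else 0)
      + 2 * (if k < i then (i:ℝ) - k - 1 else 0)
    = pent i k * (if k = 0 then 2*((n:ℝ)-1) else (n:ℝ)-2)
      + (if 1 ≤ k then pent i (k-1) * ((n:ℝ) - k) else 0) := by
  have hi' : (i:ℝ) + 1 ≤ (n:ℝ) := by exact_mod_cast (show i + 1 ≤ n by omega)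
  have hk' : (k:ℝ) + 1 ≤ (n:ℝ) := by exact_mod_cast (show k + 1 ≤ n by omega)
  have hn' : (2:ℝ) ≤ (n:ℝ) := by exact_mod_cast hn
  rcases lt_trichotomy k i with hki | rfl | hik
  · rw [pent_lt hki, pent_lt (by omega : k < i + 1)]
    rcases Nat.eq_zero_or_pos k with rfl | hk1
    · split_ifs <;> first | (exfalso; omega) | (rify at *; linarith)
    · rw [pent_lt (by omega : k - 1 < i)]
      have hc : ((k - 1 : ℕ) : ℝ) = (k : ℝ) - 1 := by
        have := Nat.cast_sub (by omega : 1 ≤ k) (R := ℝ); simpa using this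
      split_ifs <;> first | (exfalso; omega) | (rify at *; linarith [hc])
  · rw [pent_eq, pent_lt (by omega : k < k + 1)]
    rcases Nat.eq_zero_or_pos k with rfl | hi1
    · split_ifs <;> first | (exfalso; omega) | (rify at *; linarith)
    · rw [pent_lt (by omega : k - 1 < k)]
      have hc : ((k - 1 : ℕ) : ℝ) = (k : ℝ) - 1 := by
        have := Nat.cast_sub (by omega : 1 ≤ k) (R := ℝ); simpa using this
      split_ifs <;> first | (exfalso; omega) | (rify at *; linarith [hc])
  · rw [pent_gt hik]
    rcases Nat.lt_or_ge i (k - 1) with hik1 | hik1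
    · rw [pent_gt (by omega : i < k - 1), pent_gt (by omega : i + 1 < k)]
      split_ifs <;> first | (exfalso; omega) | ring
    · have hk1 : k = i + 1 := by omega
      subst hk1
      rw [show i + 1 - 1 = i from rfl, pent_eq, pent_eq]
      split_ifs
      any_goals (exfalso; omega)
      any_goals (rify at *)
      all_goals (try push_cast)
      all_goals (try linarith)


lemma split3 (n a c k : ℕ) :
    (if c = a + 1 then (n : ℝ) - (a + 1)
      else if a = c ∧ 1 ≤ a then (n : ℝ)
      else if c < a ∧ Even (a - c) then 2 else 0) * pent c k
    = (if c = a + 1 then ((n : ℝ) - (a + 1)) * pent c k else 0)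
      + (if c = a then (if 1 ≤ a then (n : ℝ) * pent c k else 0) else 0)
      + (if c < a ∧ Even (a - c) then 2 * pent c k else 0) := by
  simp only [Nat.even_iff]
  split_ifs <;> first | (exfalso; omega) | ring1

lemma split2 (n a c k : ℕ) :
    pent a c * tent n c k
    = (if c = k then pent a c * (if k = 0 then 2*((n:ℝ)-1) else (n:ℝ)-2) else 0)
      + (if c = k - 1 then (if 1 ≤ k then pent a c * ((n:ℝ) - k) else 0) else 0) := by
  unfold tent
  split_ifs <;> first | (exfalso; omega) | ring1

lemma AP_PT (n : ℕ) (hn : 2 ≤ n) :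
    (Matrix.of fun (i j : Fin n) =>
      if (j : ℕ) = (i : ℕ) + 1 then (n : ℝ) - ((i : ℕ) + 1)
      else if i = j ∧ 1 ≤ (i : ℕ) then (n : ℝ)
      else if (j : ℕ) < (i : ℕ) ∧ Even ((i : ℕ) - (j : ℕ)) then 2
      else 0) * (Matrix.of fun (i k : Fin n) => pent i k)
    = (Matrix.of fun (i k : Fin n) => pent i k)
        * (Matrix.of fun (j k : Fin n) => tent n j k) := by
  ext i k
  rw [Matrix.mul_apply, Matrix.mul_apply]
  have hL : ∀ j : Fin n,
      (Matrix.of fun (i j : Fin n) =>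
        if (j : ℕ) = (i : ℕ) + 1 then (n : ℝ) - ((i : ℕ) + 1)
        else if i = j ∧ 1 ≤ (i : ℕ) then (n : ℝ)
        else if (j : ℕ) < (i : ℕ) ∧ Even ((i : ℕ) - (j : ℕ)) then 2
        else 0) i j * (Matrix.of fun (i k : Fin n) => pent i k) j k
      = (fun jj : ℕ => (if jj = (i : ℕ) + 1 then ((n : ℝ) - ((i : ℕ) + 1)) * pent jj (k : ℕ) else 0)
        + (if jj = (i : ℕ) then (if 1 ≤ (i : ℕ) then (n : ℝ) * pent jj (k : ℕ) else 0) else 0)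
        + (if jj < (i : ℕ) ∧ Even ((i : ℕ) - jj) then 2 * pent jj (k : ℕ) else 0)) (j : ℕ) := by
    intro j
    simp only [Matrix.of_apply, Fin.ext_iff]
    exact split3 n (i : ℕ) (j : ℕ) (k : ℕ)
  rw [Finset.sum_congr rfl fun j _ => hL j]
  rw [Fin.sum_univ_eq_sum_range
      (fun jj : ℕ => (if jj = (i : ℕ) + 1 then ((n : ℝ) - ((i : ℕ) + 1)) * pent jj (k : ℕ) else 0)
        + (if jj = (i : ℕ) then (if 1 ≤ (i : ℕ) then (n : ℝ) * pent jj (k : ℕ) else 0) else 0)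
        + (if jj < (i : ℕ) ∧ Even ((i : ℕ) - jj) then 2 * pent jj (k : ℕ) else 0)) n]
  simp only [Finset.sum_add_distrib]
  have hR : ∀ j : Fin n,
      (Matrix.of fun (i k : Fin n) => pent i k) i j
        * (Matrix.of fun (j k : Fin n) => tent n j k) j k
      = (fun jj : ℕ => (if jj = (k : ℕ) then pent (i : ℕ) jj * (if (k:ℕ) = 0 then 2*((n:ℝ)-1) else (n:ℝ)-2) else 0)
        + (if jj = (k : ℕ) - 1 then (if 1 ≤ (k : ℕ) then pent (i : ℕ) jj * ((n:ℝ) - (k : ℕ)) else 0) else 0)) (j : ℕ) := by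
    intro j
    simp only [Matrix.of_apply]
    exact split2 n (i : ℕ) (j : ℕ) (k : ℕ)
  rw [Finset.sum_congr rfl fun j _ => hR j]
  rw [Fin.sum_univ_eq_sum_range
      (fun jj : ℕ => (if jj = (k : ℕ) then pent (i : ℕ) jj * (if (k:ℕ) = 0 then 2*((n:ℝ)-1) else (n:ℝ)-2) else 0)
        + (if jj = (k : ℕ) - 1 then (if 1 ≤ (k : ℕ) then pent (i : ℕ) jj * ((n:ℝ) - (k : ℕ)) else 0) else 0)) n]
  simp only [Finset.sum_add_distrib]
  rw [Finset.sum_ite_eq' (Finset.range n) ((i : ℕ) + 1)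
      (fun jj => ((n : ℝ) - ((i : ℕ) + 1)) * pent jj (k : ℕ)),
    Finset.sum_ite_eq' (Finset.range n) ((i : ℕ))
      (fun jj => (if 1 ≤ (i : ℕ) then (n : ℝ) * pent jj (k : ℕ) else 0)),
    Finset.sum_ite_eq' (Finset.range n) ((k : ℕ))
      (fun jj => pent (i : ℕ) jj * (if (k:ℕ) = 0 then 2*((n:ℝ)-1) else (n:ℝ)-2)),
    Finset.sum_ite_eq' (Finset.range n) ((k : ℕ) - 1)
      (fun jj => (if 1 ≤ (k : ℕ) then pent (i : ℕ) jj * ((n:ℝ) - (k : ℕ)) else 0))]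
  have h3 : (∑ jj ∈ Finset.range n, if jj < (i : ℕ) ∧ Even ((i : ℕ) - jj) then 2 * pent jj (k : ℕ) else 0)
      = 2 * (if (k : ℕ) < (i : ℕ) then ((i : ℕ) : ℝ) - (k : ℕ) - 1 else 0) := by
    rw [← Finset.sum_subset (Finset.range_subset_range.2 (le_of_lt i.isLt))
      (fun x _ hx => by rw [if_neg]; rw [Finset.mem_range] at hx; intro hc; exact hx hc.1)]
    rw [← key_sum (k : ℕ) (i : ℕ), Finset.mul_sum]
    refine Finset.sum_congr rfl fun j hj => ?_
    rw [Finset.mem_range] at hj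
    by_cases he : Even ((i : ℕ) - j)
    · rw [if_pos ⟨hj, he⟩, if_pos he]
    · rw [if_neg (fun hc => he hc.2), if_neg he, mul_zero]
  rw [h3]
  rw [if_pos (show (i : ℕ) ∈ Finset.range n from Finset.mem_range.2 i.isLt),
    if_pos (show (k : ℕ) ∈ Finset.range n from Finset.mem_range.2 k.isLt),
    if_pos (show (k : ℕ) - 1 ∈ Finset.range n from
      Finset.mem_range.2 (Nat.lt_of_le_of_lt (Nat.sub_le _ _) k.isLt))]
  simp only [Finset.mem_range]
  exact entry_eq n (i : ℕ) (k : ℕ) hn i.isLt k.isLt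

theorem extremal_matrix_charpoly (n : ℕ) (hn : 2 ≤ n)
    (A : Matrix (Fin n) (Fin n) ℝ)
    (hA : A = Matrix.of fun (i j : Fin n) =>
      if (j : ℕ) = (i : ℕ) + 1 then (n : ℝ) - ((i : ℕ) + 1)
      else if i = j ∧ 1 ≤ (i : ℕ) then (n : ℝ)
      else if (j : ℕ) < (i : ℕ) ∧ Even ((i : ℕ) - (j : ℕ)) then 2
      else 0) :
    A.charpoly = (X - C (2 * ((n : ℝ) - 1))) * (X - C ((n : ℝ) - 2)) ^ (n - 1) ∧
    (∀ i j, 0 ≤ ((1 / (2 * ((n : ℝ) - 1))) • A) i j) ∧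
    ((1 / (2 * ((n : ℝ) - 1))) • A) ⟨0, by omega⟩ ⟨0, by omega⟩ = 0 ∧
    specRad ((1 / (2 * ((n : ℝ) - 1))) • A) = 1 ∧
    (eigs ((1 / (2 * ((n : ℝ) - 1))) • A)).toFinset.card = 2 ∧
    spread ((1 / (2 * ((n : ℝ) - 1))) • A) = (n : ℝ) / (2 * ((n : ℝ) - 1)) := by
  have hn1 : (2:ℝ) ≤ (n:ℝ) := by exact_mod_cast hn
  have hden : 2 * ((n:ℝ) - 1) ≠ 0 := by linarith
  set c : ℝ := 1 / (2 * ((n:ℝ) - 1)) with hc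
  set P : Matrix (Fin n) (Fin n) ℝ := Matrix.of fun (i k : Fin n) => pent i k with hP
  set T : Matrix (Fin n) (Fin n) ℝ := Matrix.of fun (j k : Fin n) => tent n j k with hT
  have hAP : A * P = P * T := by rw [hA]; exact AP_PT n hn
  have hPl : ∀ i j : Fin n, i < j → P i j = 0 := fun i j hij => pent_gt hij
  have hPd : ∀ i : Fin n, P i i = 1 := fun i => pent_eq i
  have hTu : ∀ i j : Fin n, j < i → T i j = 0 := by
    intro i j hij
    show tent n i j = 0
    have hv : (j:ℕ) < (i:ℕ) := hij
    unfold tent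
    rw [if_neg (by omega), if_neg (by omega)]
  have hchar : A.charpoly = (X - C (2 * ((n : ℝ) - 1))) * (X - C ((n : ℝ) - 2)) ^ (n - 1) := by
    rw [charpoly_eq_of_triangular A P T hAP hPl hPd hTu]
    have : ∀ i : Fin n, (X - C (T i i)) =
        (if (i:ℕ) = 0 then (X - C (2 * ((n : ℝ) - 1))) else (X - C ((n : ℝ) - 2))) := by
      intro i
      show (X - C (tent n i i)) = _
      unfold tent
      rw [if_pos rfl]
      split_ifs <;> rfl
    rw [Finset.prod_congr rfl fun i _ => this i]
    exact prod_tri n (by omega) _ _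
  set β : ℝ := ((n:ℝ)-2) / (2*((n:ℝ)-1)) with hβ
  have hβ0 : 0 ≤ β := by
    rw [hβ]; apply div_nonneg <;> linarith
  have hβlt : β < 1 := by
    rw [hβ, div_lt_one (by linarith)]; linarith
  have hene : (1:ℂ) ≠ ((β:ℝ):ℂ) := by
    intro h
    have : (1:ℝ) = β := by exact_mod_cast h
    linarith
  have hmap : ∀ X Y : Matrix (Fin n) (Fin n) ℝ,
      (X*Y).map Complex.ofReal = X.map Complex.ofReal * Y.map Complex.ofReal := by
    intro X Y; ext i j
    simp [Matrix.map_apply, Matrix.mul_apply]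
  have hAPc : ((c•A).map Complex.ofReal) * (P.map Complex.ofReal)
      = (P.map Complex.ofReal) * ((c•T).map Complex.ofReal) := by
    rw [← hmap, ← hmap, smul_mul_assoc, hAP, mul_smul_comm]
  have hcharc : ((c•A).map Complex.ofReal).charpoly
      = (X - C (1:ℂ)) * (X - C ((β:ℝ):ℂ)) ^ (n-1) := by
    rw [charpoly_eq_of_triangular _ (P.map Complex.ofReal) ((c•T).map Complex.ofReal) hAPc
      (fun i j hij => by simp [Matrix.map_apply, hPl i j hij])
      (fun i => by simp [Matrix.map_apply, hPd i])
      (fun i j hij => by simp [Matrix.map_apply, Matrix.smul_apply, hTu i j hij])]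
    have hdiag : ∀ i : Fin n, (X - C (((c•T).map Complex.ofReal) i i)) =
        (if (i:ℕ) = 0 then (X - C (1:ℂ)) else (X - C ((β:ℝ):ℂ))) := by
      intro i
      have : ((c•T).map Complex.ofReal) i i = Complex.ofReal (c * tent n i i) := rfl
      rw [this]
      unfold tent
      rw [if_pos rfl]
      split_ifs with h0
      · rw [show c * (2*((n:ℝ)-1)) = 1 by rw [hc]; field_simp; exact div_self (by linarith)]
        norm_num
      · rw [show c * ((n:ℝ)-2) = β by rw [hc, hβ]; field_simp; try ring]
    rw [Finset.prod_congr rfl fun i _ => hdiag i]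
    exact prod_tri n (by omega) _ _
  have heigs : eigs (c • A) = (1:ℂ) ::ₘ Multiset.replicate (n-1) ((β:ℝ):ℂ) := by
    unfold eigs
    rw [hcharc, Polynomial.roots_mul (mul_ne_zero (Polynomial.X_sub_C_ne_zero 1)
        (pow_ne_zero _ (Polynomial.X_sub_C_ne_zero _))),
      Polynomial.roots_X_sub_C, Polynomial.roots_pow, Polynomial.roots_X_sub_C,
      Multiset.nsmul_singleton, Multiset.singleton_add]
  have hmem : ∀ μ : ℂ, μ ∈ eigs (c • A) ↔ μ = 1 ∨ μ = ((β:ℝ):ℂ) := by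
    intro μ
    rw [heigs, Multiset.mem_cons, Multiset.mem_replicate]
    constructor
    · rintro (h | ⟨-, h⟩)
      · exact Or.inl h
      · exact Or.inr h
    · rintro (h | h)
      · exact Or.inl h
      · exact Or.inr ⟨by omega, h⟩
  have habsβ : ‖((β:ℝ):ℂ)‖ = β := by
    rw [Complex.norm_real, Real.norm_eq_abs]; exact abs_of_nonneg hβ0
  refine ⟨hchar, ?_, ?_, ?_, ?_, ?_⟩
  · -- nonnegativity
    intro i j
    have hcpos : 0 ≤ c := by
      rw [hc]; apply div_nonneg; norm_num; linarith
    rw [Matrix.smul_apply, hA]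
    refine mul_nonneg hcpos ?_
    simp only [Matrix.of_apply]
    have : ((i:ℕ):ℝ) + 1 ≤ (n:ℝ) := by exact_mod_cast (show (i:ℕ) + 1 ≤ n by omega)
    split_ifs <;> linarith
  · -- zero entry
    rw [Matrix.smul_apply, hA]
    simp only [Matrix.of_apply]
    norm_num
  · -- specRad
    have hset : {r : ℝ | ∃ μ ∈ eigs (c • A), r = ‖μ‖} = {1, β} := by
      ext r
      simp only [Set.mem_setOf_eq, Set.mem_insert_iff, Set.mem_singleton_iff]
      constructor
      · rintro ⟨μ, hμ, rfl⟩
        rcases (hmem μ).1 hμ with rfl | rfl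
        · left; simp
        · right; exact habsβ
      · rintro (rfl | rfl)
        · exact ⟨1, (hmem 1).2 (Or.inl rfl), by simp⟩
        · exact ⟨((β:ℝ):ℂ), (hmem _).2 (Or.inr rfl), habsβ.symm⟩
    unfold specRad
    rw [hset, csSup_pair]
    exact sup_eq_left.2 (le_of_lt hβlt)
  · -- card
    rw [heigs, Multiset.toFinset_cons,
      show (Multiset.replicate (n-1) ((β:ℝ):ℂ)).toFinset = {((β:ℝ):ℂ)} by
        ext x; simp [Multiset.mem_replicate, (show n-1 ≠ 0 by omega)],
      Finset.card_insert_of_notMem (by simp [hene])]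
    simp
  · -- spread
    have habs1β : ‖(1 - ((β:ℝ):ℂ))‖ = 1 - β := by
      rw [show (1 : ℂ) - ((β:ℝ):ℂ) = (((1 - β : ℝ)):ℂ) by push_cast; ring,
        Complex.norm_real, Real.norm_eq_abs]
      exact abs_of_nonneg (by linarith)
    have hset : {r : ℝ | ∃ μ ∈ eigs (c • A), ∃ ν ∈ eigs (c • A), r = ‖μ - ν‖}
        = {0, 1 - β} := by
      ext r
      simp only [Set.mem_setOf_eq, Set.mem_insert_iff, Set.mem_singleton_iff]
      constructor
      · rintro ⟨μ, hμ, ν, hν, rfl⟩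
        rcases (hmem μ).1 hμ with rfl | rfl <;> rcases (hmem ν).1 hν with rfl | rfl
        · left; simp
        · right; exact habs1β
        · right; rw [← habs1β, norm_sub_rev]
        · left; simp
      · rintro (rfl | rfl)
        · exact ⟨1, (hmem 1).2 (Or.inl rfl), 1, (hmem 1).2 (Or.inl rfl), by simp⟩
        · exact ⟨1, (hmem 1).2 (Or.inl rfl), ((β:ℝ):ℂ), (hmem _).2 (Or.inr rfl), habs1β.symm⟩
    unfold spread
    rw [hset, csSup_pair]
    rw [sup_eq_right.2 (by linarith : (0:ℝ) ≤ 1 - β)]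
    rw [hβ]
    have hn1' : (n:ℝ) - 1 ≠ 0 := by linarith
    field_simp
    ring
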